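/- arXiv:2207.05237 — 2 statements merged into one kernel-verified Lean document; each statement's English description precedes it below -/
import Mathlib

section
/- Let M, N be φ-modules whose underlying 𝔖_A-modules are finitely generated and projective, and suppose there is an integer λ ≥ 0 such that u^λ·M is contained in the 𝔖_A-submodule of M generated by φ_M(M) (i.e. M has finite height; in the paper this holds with λ = eah for a Breuil–Kisin module of height at most h over a ℤ/p^aℤ-algebra). Then Hom_K(M, N) is a finitely generated A-module. -/
noncomputable section

open scoped TensorProduct

attribute [local instance] Algebra.TensorProduct.rightAlgebra

/-- The canonical `ℤ_p`-algebra structure on the Witt vectors of a ring of characteristic `p`. -/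
noncomputable instance wittPadicAlgebra (p : ℕ) [Fact p.Prime]
    (k : Type*) [CommRing k] [CharP k p] : Algebra ℤ_[p] (WittVector p k) :=
  ((WittVector.map (ZMod.castHom dvd_rfl k)).comp
    (WittVector.equiv p).symm.toRingHom).toAlgebra

/-- The Frobenius endomorphism `φ` of `𝔖_A = (W(k) ⊗_{ℤ_p} A)[[u]]` determined by a ring
endomorphism `ψ` of the coefficients together with `u ↦ u^p`:
`Σ c_n u^n ↦ Σ ψ(c_n) u^{pn}`. -/
def phiS {R : Type*} [CommRing R] (p : ℕ) (ψ : R →+* R) (f : PowerSeries R) :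
    PowerSeries R :=
  PowerSeries.mk fun n => if p ∣ n then ψ ((PowerSeries.coeff (R := R) (n / p)) f) else 0

/-- `Hom_K(M, N)`: the `A`-module of `𝔖_A`-linear maps `g : M → N` with `g ∘ φ_M = φ_N ∘ g`. -/
def phiHomSubmodule {S : Type*} [CommRing S] {A : Type*} [CommRing A] [Algebra A S]
    {M N : Type*} [AddCommGroup M] [AddCommGroup N] [Module S M] [Module S N]
    [Module A N] [IsScalarTower A S N]
    (φM : M → M) (φN : N →ₗ[A] N) : Submodule A (M →ₗ[S] N) where
  carrier := { g | ∀ x, g (φM x) = φN (g x) }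
  zero_mem' := by intro x; simp
  add_mem' := by intro g h hg hh x; simp [LinearMap.add_apply, hg x, hh x]
  smul_mem' := by intro t g hg x; simp [LinearMap.smul_apply, hg x]

universe u

namespace PhiAux

/-! ### Auxiliary lemmas on Witt vectors -/

lemma verschiebung_iterate_frobenius_iterate (p : ℕ) [hp : Fact p.Prime] {k : Type*}
    [CommRing k] [CharP k p] (n : ℕ) (x : WittVector p k) :
    WittVector.verschiebung^[n] (WittVector.frobenius^[n] x) = x * (p : WittVector p k) ^ n := by
  induction n generalizing x with
  | zero => simp
  | succ n ih =>
    have hmul : ∀ y : WittVector p k,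
        WittVector.verschiebung (y * (p : WittVector p k) ^ n) =
          WittVector.verschiebung y * (p : WittVector p k) ^ n := by
      intro y
      rw [← Nat.cast_pow, mul_comm, ← nsmul_eq_mul, map_nsmul, nsmul_eq_mul, mul_comm,
        Nat.cast_pow]
    rw [Function.iterate_succ_apply (f := ⇑(WittVector.frobenius (p := p) (R := k))),
      Function.iterate_succ_apply' (f := ⇑(WittVector.verschiebung (p := p) (R := k))),
      ih, hmul, WittVector.verschiebung_frobenius, pow_succ]
    ring

lemma exists_eq_p_pow_mul (p : ℕ) [hp : Fact p.Prime] (a : ℕ) {k : Type*} [Field k] [Finite k]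
    [CharP k p] (x : WittVector p k) (hx : ∀ i < a, x.coeff i = 0) :
    ∃ z : WittVector p k, x = (p : WittVector p k) ^ a * z := by
  haveI : ExpChar k p := ExpChar.prime hp.out
  by_cases hx0 : x = 0
  · exact ⟨0, by simp [hx0]⟩
  obtain ⟨m, c, hc0, rfl⟩ := WittVector.verschiebung_nonzero hx0
  have ham : a ≤ m := by
    by_contra hlt
    push_neg at hlt
    have := WittVector.iterate_verschiebung_coeff (p := p) c m 0
    rw [zero_add] at this
    exact hc0 (this ▸ hx m hlt)
  obtain ⟨z, hz⟩ := ((WittVector.frobenius_bijective p k).surjective.iterate a)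
    (WittVector.verschiebung^[m - a] c)
  refine ⟨z, ?_⟩
  have : WittVector.verschiebung^[m] c
      = WittVector.verschiebung^[a] (WittVector.verschiebung^[m - a] c) := by
    rw [← Function.iterate_add_apply, Nat.add_sub_cancel' ham]
  rw [this, ← hz, verschiebung_iterate_frobenius_iterate, mul_comm]

/-- If `p^a = 0` in `A` and `k` is finite, then `W(k) ⊗_{ℤ_p} A` is a finite `A`-module. -/
lemma finite_tensor (p a : ℕ) [Fact p.Prime] (k : Type*) [Field k] [Fintype k] [CharP k p]
    (A : Type*) [CommRing A] [Algebra ℤ_[p] A] (hpa : (p : A) ^ a = 0) :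
    Module.Finite A (WittVector p k ⊗[ℤ_[p]] A) := by
  classical
  have hsurj : Function.Surjective
      (WittVector.truncate (p := p) (n := a) (R := k)) :=
    WittVector.truncate_surjective p a k
  set sec : TruncatedWittVector p a k → WittVector p k := Function.surjInv hsurj with hsecdef
  have hsec : ∀ t, WittVector.truncate a (sec t) = t := fun t => Function.surjInv_eq hsurj t
  refine ⟨⟨Finset.image (fun t : TruncatedWittVector p a k => sec t ⊗ₜ[ℤ_[p]] (1 : A))
    Finset.univ, ?_⟩⟩
  rw [Submodule.eq_top_iff']
  intro x
  induction x with
  | zero => exact zero_mem _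
  | add x y hx hy => exact add_mem hx hy
  | tmul w t =>
    set g : WittVector p k := sec (WittVector.truncate a w) with hgdef
    have hker : ∀ i < a, (w - g).coeff i = 0 := by
      have h0 : WittVector.truncate a (w - g) = 0 := by
        rw [map_sub, hsec, sub_self]
      exact (WittVector.mem_ker_truncate a (w - g)).mp (RingHom.mem_ker.mpr h0)
    obtain ⟨z, hz⟩ := exists_eq_p_pow_mul p a (w - g) hker
    have hw : w = g + (p : WittVector p k) ^ a * z := by rw [← hz]; ring
    have hzero : ((p : WittVector p k) ^ a * z) ⊗ₜ[ℤ_[p]] t = 0 := by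
      have h1 : (p : WittVector p k) ^ a = algebraMap ℤ_[p] (WittVector p k) ((p : ℤ_[p]) ^ a) := by
        rw [map_pow, map_natCast]
      rw [h1, ← Algebra.smul_def, TensorProduct.smul_tmul]
      have h2 : ((p : ℤ_[p]) ^ a) • t = 0 := by
        rw [Algebra.smul_def, map_pow, map_natCast, hpa, zero_mul]
      rw [h2, TensorProduct.tmul_zero]
    have hmem : g ⊗ₜ[ℤ_[p]] (1 : A) ∈
        Submodule.span A (↑(Finset.image
          (fun u : TruncatedWittVector p a k => sec u ⊗ₜ[ℤ_[p]] (1 : A)) Finset.univ) :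
          Set (WittVector p k ⊗[ℤ_[p]] A)) :=
      Submodule.subset_span
        (Finset.mem_coe.mpr (Finset.mem_image_of_mem _ (Finset.mem_univ _)))
    have hsm : t • (g ⊗ₜ[ℤ_[p]] (1 : A)) = g ⊗ₜ[ℤ_[p]] t := by
      rw [Algebra.smul_def]
      show (1 : WittVector p k) ⊗ₜ[ℤ_[p]] t * g ⊗ₜ[ℤ_[p]] (1 : A) = _
      rw [Algebra.TensorProduct.tmul_mul_tmul, one_mul, mul_one]
    have heq : w ⊗ₜ[ℤ_[p]] t = t • (g ⊗ₜ[ℤ_[p]] (1 : A)) := by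
      calc w ⊗ₜ[ℤ_[p]] t = g ⊗ₜ[ℤ_[p]] t + ((p : WittVector p k) ^ a * z) ⊗ₜ[ℤ_[p]] t := by
            rw [← TensorProduct.add_tmul, ← hw]
        _ = t • (g ⊗ₜ[ℤ_[p]] (1 : A)) := by rw [hzero, add_zero, hsm]
    rw [heq]
    exact Submodule.smul_mem _ t hmem

/-! ### Auxiliary lemmas on power series -/

lemma phiS_X_pow {R : Type*} [CommRing R] {p : ℕ} (hp : 0 < p) (ψ : R →+* R) (n : ℕ) :
    phiS p ψ ((PowerSeries.X : PowerSeries R) ^ n) = PowerSeries.X ^ (p * n) := by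
  ext m
  simp only [phiS, PowerSeries.coeff_mk, PowerSeries.coeff_X_pow]
  by_cases hd : p ∣ m
  · obtain ⟨q, rfl⟩ := hd
    rw [if_pos (dvd_mul_right p q), Nat.mul_div_cancel_left q hp]
    by_cases hq : q = n
    · subst hq; simp
    · rw [if_neg hq, map_zero, if_neg (fun h => hq (Nat.eq_of_mul_eq_mul_left hp h))]
  · rw [if_neg hd, if_neg (fun hm : m = p * n => hd ⟨n, hm⟩)]

lemma X_pow_mul_cancel {R : Type*} [CommRing R] {t : ℕ} {f g : PowerSeries R}
    (h : PowerSeries.X ^ t * f = PowerSeries.X ^ t * g) : f = g := by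
  ext n
  have := congrArg (PowerSeries.coeff (R := R) (n + t)) h
  rwa [PowerSeries.coeff_X_pow_mul, PowerSeries.coeff_X_pow_mul] at this

/-! ### The main finiteness theorem, in abstract form -/

theorem phiHom_fg_aux {A R : Type*} [CommRing A] [IsNoetherianRing A] [CommRing R]
    [Algebra A R] [Module.Finite A R]
    (p : ℕ) (hp : 2 ≤ p) (ψ : R →+* R)
    (M N : Type*) [AddCommGroup M] [Module (PowerSeries R) M]
    [Module.Finite (PowerSeries R) M]
    [AddCommGroup N] [Module (PowerSeries R) N] [Module.Finite (PowerSeries R) N]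
    [Module.Projective (PowerSeries R) N]
    [Module A N] [IsScalarTower A (PowerSeries R) N]
    (φM : M →+ M) (φN : N →ₗ[A] N)
    (hφN : ∀ (s : PowerSeries R) (x : N), φN (s • x) = phiS p ψ s • φN x)
    (lam : ℕ)
    (hlam : ∀ x : M, ((PowerSeries.X : PowerSeries R) ^ lam) • x ∈
      Submodule.span (PowerSeries R) (Set.range φM)) :
    (phiHomSubmodule (S := PowerSeries R) (⇑φM) φN).FG := by
  classical
  set S := PowerSeries R with hSdef
  obtain ⟨d, mg, hmg⟩ := Module.Finite.exists_fin (R := S) (M := M)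
  obtain ⟨e, ng, hng⟩ := Module.Finite.exists_fin (R := S) (M := N)
  -- the surjection π : S^e → N and its section ι
  set π : (Fin e → S) →ₗ[S] N := Fintype.linearCombination S ng with hπdef
  have hπs : Function.Surjective π := by
    intro y
    have hy : y ∈ Submodule.span S (Set.range ng) := hng ▸ Submodule.mem_top
    rw [Finsupp.mem_span_range_iff_exists_finsupp] at hy
    obtain ⟨c, hc⟩ := hy
    refine ⟨fun i => c i, ?_⟩
    rw [hπdef, Fintype.linearCombination_apply]
    rw [← hc, Finsupp.sum_fintype]
    · simp
  obtain ⟨ι, hι⟩ := Module.projective_lifting_property π LinearMap.id hπs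
  have hπι : ∀ y : N, π (ι y) = y := fun y => congrArg (fun f => f y) (congrArg (·.toFun) hι)
  have hιinj : Function.Injective ι := by
    intro y1 y2 h
    rw [← hπι y1, ← hπι y2, h]
  -- regularity of X on N
  have hreg : ∀ (t : ℕ) (y1 y2 : N),
      (PowerSeries.X : S) ^ t • y1 = (PowerSeries.X : S) ^ t • y2 → y1 = y2 := by
    intro t y1 y2 h
    apply hιinj
    funext l
    have h2 : (PowerSeries.X : S) ^ t • ι y1 = (PowerSeries.X : S) ^ t • ι y2 := by
      rw [← map_smul, ← map_smul, h]
    have h3 := congrArg (fun v => v l) h2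
    simp only [Pi.smul_apply, smul_eq_mul] at h3
    exact X_pow_mul_cancel h3
  -- the filtration by divisibility by powers of X
  set Nn : ℕ → Submodule S N :=
    fun n => LinearMap.range (LinearMap.lsmul S N ((PowerSeries.X : S) ^ n)) with hNndef
  have hNmem : ∀ (n : ℕ) (y : N), y ∈ Nn n ↔ ∃ z, (PowerSeries.X : S) ^ n • z = y := by
    intro n y
    simp [hNndef, LinearMap.mem_range]
  have hNmono : ∀ {m n : ℕ}, m ≤ n → Nn n ≤ Nn m := by
    intro m n hmn y hy
    rw [hNmem] at hy ⊢
    obtain ⟨z, hz⟩ := hy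
    refine ⟨(PowerSeries.X : S) ^ (n - m) • z, ?_⟩
    rw [smul_smul, ← pow_add, Nat.add_sub_cancel' hmn, hz]
  -- the key iteration step
  have hstep : ∀ g ∈ phiHomSubmodule (S := S) (⇑φM) φN, ∀ n : ℕ, lam + 1 ≤ n →
      (∀ x, g x ∈ Nn n) → ∀ x, g x ∈ Nn (n + 1) := by
    intro g hg n hn hgn x
    have hsp : ∀ w ∈ Submodule.span S (Set.range (⇑φM)), g w ∈ Nn (p * n) := by
      intro w hw
      induction hw using Submodule.span_induction with
      | mem w hwmem =>
        obtain ⟨y, rfl⟩ := hwmem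
        rw [hg y]
        obtain ⟨z, hz⟩ := (hNmem n (g y)).mp (hgn y)
        rw [← hz, hφN, phiS_X_pow (by omega) ψ n]
        exact (hNmem _ _).mpr ⟨φN z, rfl⟩
      | zero => rw [map_zero]; exact zero_mem _
      | add w1 w2 _ _ h1 h2 => rw [map_add]; exact add_mem h1 h2
      | smul s w _ h1 => rw [map_smul]; exact Submodule.smul_mem _ s h1
    have hx := hsp _ (hlam x)
    rw [map_smul] at hx
    obtain ⟨z, hz⟩ := (hNmem _ _).mp hx
    have h2n : 2 * n ≤ p * n := Nat.mul_le_mul_right n hp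
    have hbig : lam + 1 + n ≤ p * n := by omega
    have hpn : p * n = lam + (p * n - lam) := by omega
    rw [hpn, pow_add, mul_smul] at hz
    have hgx : g x = (PowerSeries.X : S) ^ (p * n - lam) • z :=
      (hreg lam _ _ hz).symm
    have : g x ∈ Nn (p * n - lam) := (hNmem _ _).mpr ⟨z, hgx.symm⟩
    exact hNmono (by omega) this
  -- vanishing
  have hvanish : ∀ g ∈ phiHomSubmodule (S := S) (⇑φM) φN,
      (∀ x, g x ∈ Nn (lam + 1)) → g = 0 := by
    intro g hg hbase
    have hall : ∀ j : ℕ, ∀ x, g x ∈ Nn (lam + 1 + j) := by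
      intro j
      induction j with
      | zero => exact hbase
      | succ j ih => exact hstep g hg (lam + 1 + j) (by omega) ih
    have hzero : ∀ x, g x = 0 := by
      intro x
      have hι0 : ι (g x) = 0 := by
        funext l
        ext n
        obtain ⟨z, hz⟩ := (hNmem _ _).mp (hNmono (show n + 1 ≤ lam + 1 + (n + 1) by omega)
          (hall (n + 1) x))
        have := congrArg (fun v => v l) (congrArg ι hz.symm)
        simp only [map_smul, Pi.smul_apply, smul_eq_mul] at this
        rw [this, PowerSeries.coeff_X_pow_mul']
        simp
      rw [← hπι (g x), hι0, map_zero]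
    exact LinearMap.ext hzero
  -- the embedding into a Noetherian module
  set T := Fin d → Fin e → Fin (lam + 1) → R with hTdef
  set Θ : (M →ₗ[S] N) →ₗ[A] T :=
    { toFun := fun g i l j => PowerSeries.coeff (R := R) j (ι (g (mg i)) l)
      map_add' := by
        intro g1 g2
        funext i l j
        show PowerSeries.coeff (R := R) j (ι ((g1 + g2) (mg i)) l) =
          PowerSeries.coeff (R := R) j (ι (g1 (mg i)) l) + PowerSeries.coeff (R := R) j (ι (g2 (mg i)) l)
        rw [LinearMap.add_apply, map_add]
        simp [Pi.add_apply]
      map_smul' := by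
        intro t g
        funext i l j
        have h1 : (t • g) (mg i) = t • g (mg i) := rfl
        have h2 : t • g (mg i) = (algebraMap A S t) • g (mg i) :=
          (algebraMap_smul S t (g (mg i))).symm
        simp only [h1, h2, map_smul]
        simp only [Pi.smul_apply, smul_eq_mul, RingHom.id_apply]
        rw [PowerSeries.algebraMap_apply, PowerSeries.coeff_C_mul, ← Algebra.smul_def]
        rfl } with hΘdef
  have hinj : Function.Injective
      (Θ.comp (phiHomSubmodule (S := S) (⇑φM) φN).subtype) := by
    rw [← LinearMap.ker_eq_bot]
    rw [LinearMap.ker_eq_bot']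
    intro gP hgP
    obtain ⟨g, hg⟩ := gP
    have hΘg : Θ g = 0 := hgP
    have hbase : ∀ x, g x ∈ Nn (lam + 1) := by
      have hsub : (⊤ : Submodule S M) ≤ (Nn (lam + 1)).comap g := by
        rw [← hmg, Submodule.span_le]
        rintro _ ⟨i, rfl⟩
        have hco : ∀ j : Fin (lam + 1), ∀ l, PowerSeries.coeff (R := R) j (ι (g (mg i)) l) = 0 := by
          intro j l
          have := congrArg (fun f => f i l j) hΘg
          simp [hΘdef] at this
          exact this
        have hdvd : ∀ l, (PowerSeries.X : S) ^ (lam + 1) ∣ ι (g (mg i)) l := by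
          intro l
          rw [PowerSeries.X_pow_dvd_iff]
          intro m hm
          exact hco ⟨m, hm⟩ l
        choose q hq using hdvd
        have hXq : (PowerSeries.X : S) ^ (lam + 1) • q = ι (g (mg i)) := by
          funext l
          simp only [Pi.smul_apply, smul_eq_mul]
          exact (hq l).symm
        show g (mg i) ∈ Nn (lam + 1)
        refine (hNmem _ _).mpr ⟨π q, ?_⟩
        rw [← map_smul, hXq, hπι]
      intro x
      exact hsub Submodule.mem_top
    exact Subtype.ext (hvanish g hg hbase)
  haveI : IsNoetherian A T := by
    haveI : IsNoetherian A R := isNoetherian_of_isNoetherianRing_of_finite A R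
    infer_instance
  haveI : IsNoetherian A ((phiHomSubmodule (S := S) (⇑φM) φN) : Type _) :=
    isNoetherian_of_injective _ hinj
  exact Module.Finite.iff_fg.mp inferInstance

end PhiAux

/-- Let `𝔖_A := (W(k) ⊗_{ℤ_p} A)[[u]]` with its Frobenius `φ` (Witt vector Frobenius on
`W(k)`, identity on `A`, `u ↦ u^p`), with `A` Noetherian and `p^a = 0` in `A`.  Let `M`, `N`
be φ-modules that are finitely generated and projective over `𝔖_A`, and suppose `M` has
finite height: `u^λ · M` is contained in the `𝔖_A`-span of `φ_M(M)`.  Then `Hom_K(M, N)` is a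
finitely generated `A`-module. -/
theorem phiHom_finitelyGenerated
    (p a : ℕ) [Fact p.Prime] (ha : 1 ≤ a)
    (k : Type*) [Field k] [Fintype k] [CharP k p]
    (A : Type u) [CommRing A] [IsNoetherianRing A] [Algebra ℤ_[p] A]
    (hpa : (p : A) ^ a = 0)
    (ψ : WittVector p k ⊗[ℤ_[p]] A →+* WittVector p k ⊗[ℤ_[p]] A)
    (hψ : ∀ (w : WittVector p k) (x : A), ψ (w ⊗ₜ x) = WittVector.frobenius w ⊗ₜ x)
    (M : Type u) [AddCommGroup M]
    [Module (PowerSeries (WittVector p k ⊗[ℤ_[p]] A)) M]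
    [Module.Finite (PowerSeries (WittVector p k ⊗[ℤ_[p]] A)) M]
    [Module.Projective (PowerSeries (WittVector p k ⊗[ℤ_[p]] A)) M]
    (N : Type u) [AddCommGroup N]
    [Module (PowerSeries (WittVector p k ⊗[ℤ_[p]] A)) N]
    [Module.Finite (PowerSeries (WittVector p k ⊗[ℤ_[p]] A)) N]
    [Module.Projective (PowerSeries (WittVector p k ⊗[ℤ_[p]] A)) N]
    [Module A N] [IsScalarTower A (PowerSeries (WittVector p k ⊗[ℤ_[p]] A)) N]
    (φM : M →+ M)
    (hφM : ∀ (s : PowerSeries (WittVector p k ⊗[ℤ_[p]] A)) (x : M),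
      φM (s • x) = phiS p ψ s • φM x)
    (φN : N →ₗ[A] N)
    (hφN : ∀ (s : PowerSeries (WittVector p k ⊗[ℤ_[p]] A)) (x : N),
      φN (s • x) = phiS p ψ s • φN x)
    (lam : ℕ)
    (hlam : ∀ x : M, ((PowerSeries.X : PowerSeries (WittVector p k ⊗[ℤ_[p]] A)) ^ lam) • x ∈
      Submodule.span (PowerSeries (WittVector p k ⊗[ℤ_[p]] A)) (Set.range φM)) :
    (phiHomSubmodule (S := PowerSeries (WittVector p k ⊗[ℤ_[p]] A)) (⇑φM) φN).FG := by
  haveI : Module.Finite A (WittVector p k ⊗[ℤ_[p]] A) := PhiAux.finite_tensor p a k A hpa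
  exact PhiAux.phiHom_fg_aux p (Fact.out (p := p.Prime)).two_le ψ M N φM φN hφN lam hlam

end
end

section
/- If c ∈ Λ and μ ∈ Λ[[u]][1/u] satisfy μ = c·μ(u^q), then μ lies in the image of Λ (i.e. μ is a constant); if moreover μ is a unit of Λ[[u]][1/u], then c = 1. (This is the key computation in the proof that two unramified twists M_{Λ,λ} and M_{Λ,λ'} of a fixed rank one Breuil–Kisin module or étale φ-module with descent data are isomorphic only if λ = λ'.) -/
/-- The substitution `u ↦ u^q` on the ring `Λ[[u]][1/u]` of Laurent series over a commutative
ring `Λ` (realized as Hahn series over `ℤ`, whose elements are exactly the series with support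
bounded below, i.e. `Λ[[u]][1/u]`).  It is the map induced on coefficients by the order
embedding `n ↦ q * n` of `ℤ` into itself; it agrees with the ring endomorphism of
`Λ[[u]][1/u]` extending `u ↦ u^q` on `Λ[[u]]`. -/
noncomputable def substLaurent {Λ : Type*} [CommRing Λ] (q : ℕ) (hq : 0 < q)
    (μ : LaurentSeries Λ) : LaurentSeries Λ :=
  HahnSeries.embDomain
    (OrderEmbedding.ofStrictMono (fun n : ℤ => (q : ℤ) * n)
      (fun m n h => mul_lt_mul_of_pos_left h (by exact_mod_cast hq))) μ

/-- If `c ∈ Λ` and `μ ∈ Λ[[u]][1/u]` satisfy `μ = c • μ(u^q)`, then `μ` is a constant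
(it lies in the image of `Λ`); and if moreover `μ` is a unit, then `c = 1`. -/
theorem constant_of_eq_smul_subst {Λ : Type*} [CommRing Λ] (q : ℕ) (hq : 2 ≤ q)
    (c : Λ) (μ : LaurentSeries Λ)
    (hμ : μ = HahnSeries.single (0 : ℤ) c * substLaurent q (by omega) μ) :
    (∃ l : Λ, μ = HahnSeries.single (0 : ℤ) l) ∧ (IsUnit μ → c = 1) := by
  have hq0 : (0 : ℕ) < q := by omega
  set f : ℤ ↪o ℤ := OrderEmbedding.ofStrictMono (fun n : ℤ => (q : ℤ) * n)
      (fun m n h => mul_lt_mul_of_pos_left h (by exact_mod_cast hq0)) with hf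
  have hfc : ∀ n : ℤ, f n = (q : ℤ) * n := fun n => rfl
  have key : ∀ n : ℤ, μ.coeff n =
      c * (HahnSeries.embDomain f μ).coeff n := by
    intro n
    conv_lhs => rw [hμ]
    rw [HahnSeries.coeff_single_zero_mul]
    rfl
  have hzero : ∀ k : ℕ, ∀ n : ℤ, n.natAbs ≤ k → n ≠ 0 → μ.coeff n = 0 := by
    intro k
    induction k with
    | zero => intro n h1 h2; omega
    | succ k ih =>
      intro n h1 h2
      by_cases hd : (q : ℤ) ∣ n
      · obtain ⟨m, rfl⟩ := hd
        have hm : m ≠ 0 := by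
          rintro rfl; simp at h2
        have hmabs : m.natAbs ≤ k := by
          have : ((q : ℤ) * m).natAbs = q * m.natAbs := by
            simp [Int.natAbs_mul]
          have hm1 : 1 ≤ m.natAbs := by omega
          nlinarith [this]
        have : ((q : ℤ) * m) = f m := rfl
        rw [key, this, HahnSeries.embDomain_coeff, ih m hmabs hm, mul_zero]
      · rw [key, HahnSeries.embDomain_notin_range, mul_zero]
        rintro ⟨m, rfl⟩
        exact hd ⟨m, rfl⟩
  have hconst : μ = HahnSeries.single (0 : ℤ) (μ.coeff 0) := by
    ext n
    by_cases hn : n = 0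
    · subst hn; simp
    · rw [hzero n.natAbs n le_rfl hn, HahnSeries.coeff_single_of_ne hn]
  refine ⟨⟨μ.coeff 0, hconst⟩, ?_⟩
  intro hu
  set l := μ.coeff 0 with hl
  -- l is a unit
  obtain ⟨u, hu'⟩ := hu
  have hmul : u.val * u.inv = 1 := u.val_inv
  have hlunit : IsUnit l := by
    have h0 : (μ * (u.inv : LaurentSeries Λ)).coeff 0 = 1 := by
      rw [← hu', hmul]; simp
    rw [hconst, HahnSeries.coeff_single_zero_mul] at h0
    exact IsUnit.of_mul_eq_one _ h0
  -- l = c * l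
  have hsub : HahnSeries.embDomain f (HahnSeries.single (0 : ℤ) l) =
      HahnSeries.single (0 : ℤ) l := by
    have hf0 : f 0 = 0 := by rw [hfc]; ring
    rw [HahnSeries.embDomain_single, hf0]
  have hcl : l = c * l := by
    have h1 : μ = HahnSeries.single (0 : ℤ) c * HahnSeries.single (0 : ℤ) l := by
      conv_lhs => rw [hμ]
      rw [show substLaurent q (by omega) μ = HahnSeries.embDomain f μ from rfl, hconst, hsub]
    rw [HahnSeries.single_mul_single, zero_add] at h1
    have := congrArg (fun x => HahnSeries.coeff x 0) h1
    simpa using this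
  have : c * l = 1 * l := by rw [one_mul, ← hcl]
  exact hlunit.mul_right_cancel this
end
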